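/- For all integers g₁, g₂ ≥ 3, the polynomial p ∈ ℚ[X] whose image in ℚ(X) equals P₁₂(g₁,g₂) satisfies p(−1) = 0; that is, the topological Euler characteristic of the component M₁₂, obtained by evaluating its Poincaré polynomial at t = −1, vanishes. -/

import Mathlib

open Polynomial

set_option maxHeartbeats 4000000
set_option maxRecDepth 10000

/-- `Q_g = ((1+X³)^{2g} − X^{2g}(1+X)^{2g}) / ((1−X²)(1−X⁴))` in `ℚ(X)`:
the Harder–Narasimhan Poincaré polynomial of the moduli space of rank-2 stable
bundles of fixed odd-degree determinant on a smooth projective curve of genus `g`. -/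
noncomputable def Qg (g : ℕ) : RatFunc ℚ :=
  ((1 + RatFunc.X ^ 3) ^ (2 * g) - RatFunc.X ^ (2 * g) * (1 + RatFunc.X) ^ (2 * g)) /
    ((1 - RatFunc.X ^ 2) * (1 - RatFunc.X ^ 4))

/-- `J_g = (1+X)^{2g}`, the Poincaré polynomial of the Jacobian. -/
noncomputable def Jg (g : ℕ) : RatFunc ℚ := (1 + RatFunc.X) ^ (2 * g)

/-- `Pⁿ = 1 + X² + ⋯ + X^{2n}`, the Poincaré polynomial of `ℙⁿ`. -/
noncomputable def Pn (n : ℕ) : RatFunc ℚ := ∑ i ∈ Finset.range (n + 1), RatFunc.X ^ (2 * i)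

/-- `K_g = 1 + X^{2g} + Σ_{0<i<2g, i even} (C(2g,i) + 2^{2g}) X^i`,
the Poincaré polynomial of the desingularized Kummer variety. -/
noncomputable def Kg (g : ℕ) : RatFunc ℚ :=
  1 + RatFunc.X ^ (2 * g) +
    ∑ i ∈ (Finset.Ioo 0 (2 * g)).filter (fun i => Even i),
      (((2 * g).choose i : RatFunc ℚ) + 2 ^ (2 * g)) * RatFunc.X ^ i

/-- `β̃₁` from Theorem 4.2 of the paper. -/
noncomputable def betaT1 (g₂ : ℕ) : RatFunc ℚ :=
  Kg g₂ * RatFunc.X ^ (4 * g₂ - 4) / (1 + RatFunc.X ^ 2) +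
    Jg g₂ * (RatFunc.X ^ (4 * g₂ - 2) / (1 - RatFunc.X ^ 4) +
      Pn (g₂ - 2) * RatFunc.X ^ (2 * g₂ - 2)) -
    2 ^ (2 * g₂) * Pn (g₂ - 1) * RatFunc.X ^ (4 * g₂ - 2) / (1 + RatFunc.X ^ 2) -
    2 ^ (2 * g₂) * (RatFunc.X ^ (6 * g₂ - 2) / (1 - RatFunc.X ^ 4) +
      Pn (g₂ - 2) * RatFunc.X ^ (4 * g₂ - 2))

/-- `β̃₂` from Theorem 4.2 of the paper. -/
noncomputable def betaT2 (g₂ : ℕ) : RatFunc ℚ :=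
  2 ^ (2 * g₂) * (RatFunc.X ^ (6 * g₂) / (1 - RatFunc.X ^ 4) +
    RatFunc.X ^ (4 * g₂ - 2) * Pn (g₂ - 1))

/-- `P₁₂(g₁,g₂) ∈ ℚ(X)`, the Poincaré polynomial of the component `M₁₂` of the moduli
space of rank-2 stable torsion-free sheaves with fixed determinant on a nodal curve
`X₁ ∪ X₂` whose smooth components have genera `g₁, g₂` (Theorem 4.2 of the paper). -/
noncomputable def P12 (g₁ g₂ : ℕ) : RatFunc ℚ :=
  Qg g₁ * (1 - RatFunc.X ^ 4) *
      (Qg g₂ + Jg g₂ * RatFunc.X ^ (2 * g₂) / (1 - RatFunc.X ^ 4) - (betaT1 g₂ + betaT2 g₂)) +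
    Qg g₁ * 2 ^ (2 * g₂) *
      (RatFunc.X ^ (6 * g₂) + RatFunc.X ^ (4 * g₂ - 2) * (1 - RatFunc.X ^ 4) * Pn (g₂ - 1)) +
    Qg g₁ *
      (Kg g₂ * RatFunc.X ^ (4 * g₂ - 4) * (1 - RatFunc.X ^ 2) +
        Jg g₂ * (RatFunc.X ^ (4 * g₂ - 2) +
          RatFunc.X ^ (2 * g₂ - 2) * (1 - RatFunc.X ^ 4) * Pn (g₂ - 2)) -
        2 ^ (2 * g₂) *
          (RatFunc.X ^ (6 * g₂ - 2) +
            RatFunc.X ^ (4 * g₂ - 2) * (1 - RatFunc.X ^ 4) * Pn (g₂ - 2) +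
            RatFunc.X ^ (4 * g₂ - 2) * (1 - RatFunc.X ^ 2) * Pn (g₂ - 1))) +
    Qg g₁ * Qg g₂ * RatFunc.X ^ 2 * (1 + 2 * RatFunc.X ^ 2 + RatFunc.X ^ 4)

/-- For all integers `g₁, g₂ ≥ 3`, the polynomial `p ∈ ℚ[X]` whose image in `ℚ(X)` equals
`P₁₂(g₁,g₂)` satisfies `p(−1) = 0`: the topological Euler characteristic of the
component `M₁₂` vanishes. -/


noncomputable def pT (g : ℕ) : ℚ[X] := (1 - X + X ^ 2) ^ (2 * g) - X ^ (2 * g)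

noncomputable def pP (n : ℕ) : ℚ[X] := ∑ i ∈ Finset.range (n + 1), X ^ (2 * i)

noncomputable def pK (g : ℕ) : ℚ[X] :=
  1 + X ^ (2 * g) +
    ∑ i ∈ (Finset.Ioo 0 (2 * g)).filter (fun i => Even i),
      (((2 * g).choose i : ℚ[X]) + 2 ^ (2 * g)) * X ^ i

noncomputable def Wp1 (g : ℕ) : ℚ[X] :=
  (1 - X ^ 4) * (1 + X ^ 2) * (1 + X) ^ (2 * g) * pT g

noncomputable def Wp2 (g : ℕ) : ℚ[X] :=
  (1 - X ^ 2) * (1 - X ^ 4) * (1 + X ^ 2) * (1 + X) ^ (2 * g) * X ^ (2 * g)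

noncomputable def Wp3 (g : ℕ) : ℚ[X] :=
  (1 - X ^ 2) * (1 - X ^ 4) ^ 2 * pK g * X ^ (4 * g - 4)
    + (1 - X ^ 2) * (1 - X ^ 4) * (1 + X ^ 2) * (1 + X) ^ (2 * g) * X ^ (4 * g - 2)
    + (1 - X ^ 2) * (1 - X ^ 4) ^ 2 * (1 + X ^ 2) * (1 + X) ^ (2 * g) * pP (g - 2) *
        X ^ (2 * g - 2)
    - 2 ^ (2 * g) * ((1 - X ^ 2) * (1 - X ^ 4) ^ 2) * pP (g - 1) * X ^ (4 * g - 2)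
    - 2 ^ (2 * g) * ((1 - X ^ 2) * (1 - X ^ 4) * (1 + X ^ 2)) * X ^ (6 * g - 2)
    - 2 ^ (2 * g) * ((1 - X ^ 2) * (1 - X ^ 4) ^ 2 * (1 + X ^ 2)) * pP (g - 2) *
        X ^ (4 * g - 2)

noncomputable def Wp4 (g : ℕ) : ℚ[X] :=
  2 ^ (2 * g) * ((1 - X ^ 2) * (1 - X ^ 4) * (1 + X ^ 2) * X ^ (6 * g)
    + (1 - X ^ 2) * (1 - X ^ 4) ^ 2 * (1 + X ^ 2) * X ^ (4 * g - 2) * pP (g - 1))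

noncomputable def Wp5 (g : ℕ) : ℚ[X] :=
  (1 - X ^ 2) * (1 - X ^ 4) * (1 + X ^ 2) * 2 ^ (2 * g) *
    (X ^ (6 * g) + X ^ (4 * g - 2) * (1 - X ^ 4) * pP (g - 1))

noncomputable def Wp6 (g : ℕ) : ℚ[X] :=
  (1 - X ^ 2) * (1 - X ^ 4) * (1 + X ^ 2) *
    (pK g * X ^ (4 * g - 4) * (1 - X ^ 2)
      + (1 + X) ^ (2 * g) * (X ^ (4 * g - 2) + X ^ (2 * g - 2) * (1 - X ^ 4) * pP (g - 2))
      - 2 ^ (2 * g) * (X ^ (6 * g - 2) + X ^ (4 * g - 2) * (1 - X ^ 4) * pP (g - 2)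
          + X ^ (4 * g - 2) * (1 - X ^ 2) * pP (g - 1)))

noncomputable def Wp7 (g : ℕ) : ℚ[X] :=
  (1 + X) ^ (2 * g) * pT g * X ^ 2 * (1 + X ^ 2) ^ 3

noncomputable def Wp (g : ℕ) : ℚ[X] :=
  Wp1 g + Wp2 g - (Wp3 g + Wp4 g) + Wp5 g + Wp6 g + Wp7 g

noncomputable def Dp : ℚ[X] := ((1 - X ^ 2) * (1 - X ^ 4)) ^ 2 * (1 + X ^ 2)

lemma algebraMap_pP (n : ℕ) : algebraMap ℚ[X] (RatFunc ℚ) (pP n) = Pn n := by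
  simp [pP, Pn, map_sum, map_pow, RatFunc.algebraMap_X]

lemma algebraMap_pK (g : ℕ) : algebraMap ℚ[X] (RatFunc ℚ) (pK g) = Kg g := by
  simp [pK, Kg, map_sum, map_pow, map_add, map_mul, map_ofNat, RatFunc.algebraMap_X]

lemma neX2 : (1 - RatFunc.X ^ 2 : RatFunc ℚ) ≠ 0 := by
  rw [show (1 - RatFunc.X ^ 2 : RatFunc ℚ) = algebraMap ℚ[X] (RatFunc ℚ) (1 - X ^ 2) by
    simp [map_sub, map_pow, RatFunc.algebraMap_X]]
  rw [map_ne_zero_iff _ (IsFractionRing.injective ℚ[X] (RatFunc ℚ))]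
  intro h
  have := congrArg (Polynomial.eval 0) h
  simp at this

lemma neX4 : (1 - RatFunc.X ^ 4 : RatFunc ℚ) ≠ 0 := by
  rw [show (1 - RatFunc.X ^ 4 : RatFunc ℚ) = algebraMap ℚ[X] (RatFunc ℚ) (1 - X ^ 4) by
    simp [map_sub, map_pow, RatFunc.algebraMap_X]]
  rw [map_ne_zero_iff _ (IsFractionRing.injective ℚ[X] (RatFunc ℚ))]
  intro h
  have := congrArg (Polynomial.eval 0) h
  simp at this

lemma neC : (1 + RatFunc.X ^ 2 : RatFunc ℚ) ≠ 0 := by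
  rw [show (1 + RatFunc.X ^ 2 : RatFunc ℚ) = algebraMap ℚ[X] (RatFunc ℚ) (1 + X ^ 2) by
    simp [map_add, map_pow, RatFunc.algebraMap_X]]
  rw [map_ne_zero_iff _ (IsFractionRing.injective ℚ[X] (RatFunc ℚ))]
  intro h
  have := congrArg (Polynomial.eval 0) h
  simp at this

lemma keyh1 (a b : ℕ) :
    (Qg (a + 3) * (1 - RatFunc.X ^ 4) * Qg (b + 3)) * algebraMap ℚ[X] (RatFunc ℚ) Dp =
      algebraMap ℚ[X] (RatFunc ℚ) ((1 + X) ^ (2 * (a + 3)) * pT (a + 3) * Wp1 (b + 3)) := by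
  simp only [Qg, Jg, Wp1, pT, Dp, map_mul, map_add, map_sub, map_pow, map_one, map_ofNat,
    RatFunc.algebraMap_X, algebraMap_pP, algebraMap_pK]
  try simp only [show 4 * (b + 3) - 4 = 4 * b + 8 from by omega,
    show 4 * (b + 3) - 2 = 4 * b + 10 from by omega,
    show 2 * (b + 3) - 2 = 2 * b + 4 from by omega,
    show 6 * (b + 3) - 2 = 6 * b + 16 from by omega,
    show b + 3 - 1 = b + 2 from by omega,
    show b + 3 - 2 = b + 1 from by omega]
  rw [show (1 + RatFunc.X ^ 3 : RatFunc ℚ) =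
      (1 + RatFunc.X) * (1 - RatFunc.X + RatFunc.X ^ 2) by ring]
  simp only [mul_pow]
  field_simp [neX2, neX4, neC]

lemma keyh2 (a b : ℕ) :
    (Qg (a + 3) * (1 - RatFunc.X ^ 4) * (Jg (b + 3) * RatFunc.X ^ (2 * (b + 3)) / (1 - RatFunc.X ^ 4))) * algebraMap ℚ[X] (RatFunc ℚ) Dp =
      algebraMap ℚ[X] (RatFunc ℚ) ((1 + X) ^ (2 * (a + 3)) * pT (a + 3) * Wp2 (b + 3)) := by
  simp only [Qg, Jg, Wp2, pT, Dp, map_mul, map_add, map_sub, map_pow, map_one, map_ofNat,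
    RatFunc.algebraMap_X, algebraMap_pP, algebraMap_pK]
  try simp only [show 4 * (b + 3) - 4 = 4 * b + 8 from by omega,
    show 4 * (b + 3) - 2 = 4 * b + 10 from by omega,
    show 2 * (b + 3) - 2 = 2 * b + 4 from by omega,
    show 6 * (b + 3) - 2 = 6 * b + 16 from by omega,
    show b + 3 - 1 = b + 2 from by omega,
    show b + 3 - 2 = b + 1 from by omega]
  rw [show (1 + RatFunc.X ^ 3 : RatFunc ℚ) =
      (1 + RatFunc.X) * (1 - RatFunc.X + RatFunc.X ^ 2) by ring]
  simp only [mul_pow]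
  field_simp [neX2, neX4, neC]

lemma hQclear (g : ℕ) :
    Qg g * ((1 - RatFunc.X ^ 2) * (1 - RatFunc.X ^ 4)) =
      (1 + RatFunc.X) ^ (2 * g) *
        ((1 - RatFunc.X + RatFunc.X ^ 2) ^ (2 * g) - RatFunc.X ^ (2 * g)) := by
  rw [Qg, div_mul_cancel₀ _ (mul_ne_zero neX2 neX4),
    show (1 + RatFunc.X ^ 3 : RatFunc ℚ) =
      (1 + RatFunc.X) * (1 - RatFunc.X + RatFunc.X ^ 2) by ring, mul_pow]
  ring

lemma hB1clear (b : ℕ) :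
    betaT1 (b + 3) * ((1 + RatFunc.X ^ 2) * (1 - RatFunc.X ^ 4)) =
      Kg (b + 3) * RatFunc.X ^ (4 * b + 8) * (1 - RatFunc.X ^ 4)
      + (1 + RatFunc.X) ^ (2 * (b + 3)) * ((1 + RatFunc.X ^ 2) * RatFunc.X ^ (4 * b + 10)
          + (1 + RatFunc.X ^ 2) * (1 - RatFunc.X ^ 4) * Pn (b + 1) * RatFunc.X ^ (2 * b + 4))
      - 2 ^ (2 * (b + 3)) * Pn (b + 2) * RatFunc.X ^ (4 * b + 10) * (1 - RatFunc.X ^ 4)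
      - 2 ^ (2 * (b + 3)) * ((1 + RatFunc.X ^ 2) * RatFunc.X ^ (6 * b + 16)
          + (1 + RatFunc.X ^ 2) * (1 - RatFunc.X ^ 4) * Pn (b + 1) * RatFunc.X ^ (4 * b + 10)) := by
  rw [betaT1, Jg]
  simp only [show 4 * (b + 3) - 4 = 4 * b + 8 from by omega,
    show 4 * (b + 3) - 2 = 4 * b + 10 from by omega,
    show 2 * (b + 3) - 2 = 2 * b + 4 from by omega,
    show 6 * (b + 3) - 2 = 6 * b + 16 from by omega,
    show b + 3 - 1 = b + 2 from by omega,
    show b + 3 - 2 = b + 1 from by omega]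
  field_simp [neC, neX4]

lemma keyh3 (a b : ℕ) :
    (Qg (a + 3) * (1 - RatFunc.X ^ 4) * betaT1 (b + 3)) * algebraMap ℚ[X] (RatFunc ℚ) Dp =
      algebraMap ℚ[X] (RatFunc ℚ) ((1 + X) ^ (2 * (a + 3)) * pT (a + 3) * Wp3 (b + 3)) := by
  have hA := hQclear (a + 3)
  have hB := hB1clear b
  simp only [Dp, Wp3, pT, map_mul, map_add, map_sub, map_pow, map_one, map_ofNat,
    RatFunc.algebraMap_X, algebraMap_pP, algebraMap_pK]
  simp only [show 4 * (b + 3) - 4 = 4 * b + 8 from by omega,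
    show 4 * (b + 3) - 2 = 4 * b + 10 from by omega,
    show 2 * (b + 3) - 2 = 2 * b + 4 from by omega,
    show 6 * (b + 3) - 2 = 6 * b + 16 from by omega,
    show b + 3 - 1 = b + 2 from by omega,
    show b + 3 - 2 = b + 1 from by omega]
  linear_combination
    (betaT1 (b + 3) * ((1 + RatFunc.X ^ 2) * (1 - RatFunc.X ^ 4)) *
      ((1 - RatFunc.X ^ 2) * (1 - RatFunc.X ^ 4))) * hA +
    ((1 + RatFunc.X) ^ (2 * (a + 3)) *
      ((1 - RatFunc.X + RatFunc.X ^ 2) ^ (2 * (a + 3)) - RatFunc.X ^ (2 * (a + 3))) *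
      ((1 - RatFunc.X ^ 2) * (1 - RatFunc.X ^ 4))) * hB

lemma keyh4 (a b : ℕ) :
    (Qg (a + 3) * (1 - RatFunc.X ^ 4) * betaT2 (b + 3)) * algebraMap ℚ[X] (RatFunc ℚ) Dp =
      algebraMap ℚ[X] (RatFunc ℚ) ((1 + X) ^ (2 * (a + 3)) * pT (a + 3) * Wp4 (b + 3)) := by
  simp only [Qg, Jg, Wp4, pT, Dp, betaT2, map_mul, map_add, map_sub, map_pow, map_one, map_ofNat,
    RatFunc.algebraMap_X, algebraMap_pP, algebraMap_pK]
  try simp only [show 4 * (b + 3) - 4 = 4 * b + 8 from by omega,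
    show 4 * (b + 3) - 2 = 4 * b + 10 from by omega,
    show 2 * (b + 3) - 2 = 2 * b + 4 from by omega,
    show 6 * (b + 3) - 2 = 6 * b + 16 from by omega,
    show b + 3 - 1 = b + 2 from by omega,
    show b + 3 - 2 = b + 1 from by omega]
  rw [show (1 + RatFunc.X ^ 3 : RatFunc ℚ) =
      (1 + RatFunc.X) * (1 - RatFunc.X + RatFunc.X ^ 2) by ring]
  simp only [mul_pow]
  field_simp [neX2, neX4, neC]

lemma keyh5 (a b : ℕ) :
    (Qg (a + 3) * 2 ^ (2 * (b + 3)) *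
      (RatFunc.X ^ (6 * (b + 3)) + RatFunc.X ^ (4 * (b + 3) - 2) * (1 - RatFunc.X ^ 4) * Pn (b + 3 - 1))) * algebraMap ℚ[X] (RatFunc ℚ) Dp =
      algebraMap ℚ[X] (RatFunc ℚ) ((1 + X) ^ (2 * (a + 3)) * pT (a + 3) * Wp5 (b + 3)) := by
  simp only [Qg, Jg, Wp5, pT, Dp, map_mul, map_add, map_sub, map_pow, map_one, map_ofNat,
    RatFunc.algebraMap_X, algebraMap_pP, algebraMap_pK]
  try simp only [show 4 * (b + 3) - 4 = 4 * b + 8 from by omega,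
    show 4 * (b + 3) - 2 = 4 * b + 10 from by omega,
    show 2 * (b + 3) - 2 = 2 * b + 4 from by omega,
    show 6 * (b + 3) - 2 = 6 * b + 16 from by omega,
    show b + 3 - 1 = b + 2 from by omega,
    show b + 3 - 2 = b + 1 from by omega]
  rw [show (1 + RatFunc.X ^ 3 : RatFunc ℚ) =
      (1 + RatFunc.X) * (1 - RatFunc.X + RatFunc.X ^ 2) by ring]
  simp only [mul_pow]
  field_simp [neX2, neX4, neC]

lemma keyh6 (a b : ℕ) :
    (Qg (a + 3) *
      (Kg (b + 3) * RatFunc.X ^ (4 * (b + 3) - 4) * (1 - RatFunc.X ^ 2) +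
        Jg (b + 3) * (RatFunc.X ^ (4 * (b + 3) - 2) +
          RatFunc.X ^ (2 * (b + 3) - 2) * (1 - RatFunc.X ^ 4) * Pn (b + 3 - 2)) -
        2 ^ (2 * (b + 3)) *
          (RatFunc.X ^ (6 * (b + 3) - 2) +
            RatFunc.X ^ (4 * (b + 3) - 2) * (1 - RatFunc.X ^ 4) * Pn (b + 3 - 2) +
            RatFunc.X ^ (4 * (b + 3) - 2) * (1 - RatFunc.X ^ 2) * Pn (b + 3 - 1)))) * algebraMap ℚ[X] (RatFunc ℚ) Dp =
      algebraMap ℚ[X] (RatFunc ℚ) ((1 + X) ^ (2 * (a + 3)) * pT (a + 3) * Wp6 (b + 3)) := by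
  simp only [Qg, Jg, Wp6, pT, Dp, map_mul, map_add, map_sub, map_pow, map_one, map_ofNat,
    RatFunc.algebraMap_X, algebraMap_pP, algebraMap_pK]
  try simp only [show 4 * (b + 3) - 4 = 4 * b + 8 from by omega,
    show 4 * (b + 3) - 2 = 4 * b + 10 from by omega,
    show 2 * (b + 3) - 2 = 2 * b + 4 from by omega,
    show 6 * (b + 3) - 2 = 6 * b + 16 from by omega,
    show b + 3 - 1 = b + 2 from by omega,
    show b + 3 - 2 = b + 1 from by omega]
  rw [show (1 + RatFunc.X ^ 3 : RatFunc ℚ) =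
      (1 + RatFunc.X) * (1 - RatFunc.X + RatFunc.X ^ 2) by ring]
  simp only [mul_pow]
  field_simp [neX2, neX4, neC]

lemma keyh7 (a b : ℕ) :
    (Qg (a + 3) * Qg (b + 3) * RatFunc.X ^ 2 * (1 + 2 * RatFunc.X ^ 2 + RatFunc.X ^ 4)) * algebraMap ℚ[X] (RatFunc ℚ) Dp =
      algebraMap ℚ[X] (RatFunc ℚ) ((1 + X) ^ (2 * (a + 3)) * pT (a + 3) * Wp7 (b + 3)) := by
  simp only [Qg, Jg, Wp7, pT, Dp, map_mul, map_add, map_sub, map_pow, map_one, map_ofNat,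
    RatFunc.algebraMap_X, algebraMap_pP, algebraMap_pK]
  try simp only [show 4 * (b + 3) - 4 = 4 * b + 8 from by omega,
    show 4 * (b + 3) - 2 = 4 * b + 10 from by omega,
    show 2 * (b + 3) - 2 = 2 * b + 4 from by omega,
    show 6 * (b + 3) - 2 = 6 * b + 16 from by omega,
    show b + 3 - 1 = b + 2 from by omega,
    show b + 3 - 2 = b + 1 from by omega]
  rw [show (1 + RatFunc.X ^ 3 : RatFunc ℚ) =
      (1 + RatFunc.X) * (1 - RatFunc.X + RatFunc.X ^ 2) by ring]
  simp only [mul_pow]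
  field_simp [neX2, neX4, neC]
  ring1

lemma key_identity (a b : ℕ) :
    P12 (a + 3) (b + 3) * algebraMap ℚ[X] (RatFunc ℚ) Dp =
      algebraMap ℚ[X] (RatFunc ℚ) ((1 + X) ^ (2 * (a + 3)) * pT (a + 3) * Wp (b + 3)) := by
  have h1 := keyh1 a b
  have h2 := keyh2 a b
  have h3 := keyh3 a b
  have h4 := keyh4 a b
  have h5 := keyh5 a b
  have h6 := keyh6 a b
  have h7 := keyh7 a b
  simp only [P12, Wp, map_mul, map_add, map_sub] at *
  linear_combination h1 + h2 - (h3 + h4) + h5 + h6 + h7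

theorem P12_euler_char_zero (g₁ g₂ : ℕ) (h₁ : 3 ≤ g₁) (h₂ : 3 ≤ g₂) (p : ℚ[X])
    (hp : algebraMap ℚ[X] (RatFunc ℚ) p = P12 g₁ g₂) :
    p.eval (-1) = 0 := by
  obtain ⟨a, rfl⟩ : ∃ a, g₁ = a + 3 := ⟨g₁ - 3, by omega⟩
  obtain ⟨b, rfl⟩ : ∃ b, g₂ = b + 3 := ⟨g₂ - 3, by omega⟩
  have key := key_identity a b
  rw [← hp, ← map_mul] at key
  have hpoly : p * Dp = (1 + X) ^ (2 * (a + 3)) * pT (a + 3) * Wp (b + 3) :=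
    IsFractionRing.injective ℚ[X] (RatFunc ℚ) key
  have hfac : (1 + X : ℚ[X]) ^ 4 * (p * ((1 - X) ^ 4 * (1 + X ^ 2) ^ 3)) =
      (1 + X : ℚ[X]) ^ 4 * ((1 + X) ^ (2 * a + 2) * pT (a + 3) * Wp (b + 3)) := by
    calc (1 + X : ℚ[X]) ^ 4 * (p * ((1 - X) ^ 4 * (1 + X ^ 2) ^ 3))
        = p * Dp := by rw [Dp]; ring
      _ = (1 + X) ^ (2 * (a + 3)) * pT (a + 3) * Wp (b + 3) := hpoly
      _ = (1 + X : ℚ[X]) ^ 4 * ((1 + X) ^ (2 * a + 2) * pT (a + 3) * Wp (b + 3)) := by ring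
  have h4 : ((1 + X : ℚ[X]) ^ 4) ≠ 0 := by
    intro h
    have := congrArg (Polynomial.eval 0) h
    simp at this
  have hcancel : p * ((1 - X) ^ 4 * (1 + X ^ 2) ^ 3) =
      (1 + X) ^ (2 * a + 2) * pT (a + 3) * Wp (b + 3) := mul_left_cancel₀ h4 hfac
  have heval := congrArg (Polynomial.eval (-1 : ℚ)) hcancel
  simp [eval_mul, eval_pow, eval_add, eval_sub, eval_one] at heval
  exact heval
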